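/- arXiv:2504.18358 — 2 statements merged into one kernel-verified Lean document; each statement's English description precedes it below -/
import Mathlib

section
/- Let H be a complex Hilbert space, let P, S ∈ Σ⁺(H), and let t ≥ 0. Then the identity (I + tPS)⁻¹ P = P^{1/2} (I + t P^{1/2} S P^{1/2})⁻¹ P^{1/2} holds in ℒ(H), where both inverses exist as bounded operators. -/
section RingLemmas

variable {A : Type*} [Ring A]

lemma aux_isUnit_one_add_mul {a b : A} (h : IsUnit (1 + b * a)) : IsUnit (1 + a * b) := by
  obtain ⟨u, hu⟩ := h
  refine isUnit_iff_exists.mpr ⟨1 - a * ((u⁻¹ : Aˣ) : A) * b, ?_, ?_⟩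
  · calc (1 + a * b) * (1 - a * ((u⁻¹ : Aˣ) : A) * b)
        = 1 + a * b - a * ((1 + b * a) * ((u⁻¹ : Aˣ) : A)) * b := by noncomm_ring
      _ = 1 := by rw [← hu, Units.mul_inv]; noncomm_ring
  · calc (1 - a * ((u⁻¹ : Aˣ) : A) * b) * (1 + a * b)
        = 1 + a * b - a * (((u⁻¹ : Aˣ) : A) * (1 + b * a)) * b := by noncomm_ring
      _ = 1 := by rw [← hu, Units.inv_mul]; noncomm_ring

lemma aux_inverse_one_add_mul (a b : A) (h1 : IsUnit (1 + a * b)) (h2 : IsUnit (1 + b * a)) :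
    Ring.inverse (1 + a * b) * a = a * Ring.inverse (1 + b * a) := by
  have key : (1 + a * b) * a = a * (1 + b * a) := by noncomm_ring
  calc Ring.inverse (1 + a * b) * a
      = Ring.inverse (1 + a * b) * (a * (1 + b * a)) * Ring.inverse (1 + b * a) := by
        rw [mul_assoc (Ring.inverse (1 + a * b)), mul_assoc,
          Ring.mul_inverse_cancel _ h2, mul_one]
    _ = Ring.inverse (1 + a * b) * ((1 + a * b) * a) * Ring.inverse (1 + b * a) := by rw [key]
    _ = a * Ring.inverse (1 + b * a) := by
        rw [← mul_assoc, Ring.inverse_mul_cancel _ h1, one_mul]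

end RingLemmas

open ContinuousLinearMap in
lemma aux_isUnit_one_add_pos {H : Type*} [NormedAddCommGroup H] [InnerProductSpace ℂ H]
    [CompleteSpace H] {A : H →L[ℂ] H} (hA : A.IsPositive) : IsUnit (1 + A) := by
  apply isUnit_of_forall_le_norm_inner_map (1 + A) (c := 1) one_pos
  intro x
  have h1 : ‖x‖ ^ 2 + A.reApplyInnerSelf x = RCLike.re (inner ℂ ((1 + A) x) x : ℂ) := by
    simp only [add_apply, one_apply, inner_add_left, map_add, reApplyInnerSelf]
    rw [← @inner_self_eq_norm_sq ℂ]
    rfl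
  have h2 : RCLike.re (inner ℂ ((1 + A) x) x : ℂ) ≤ ‖(inner ℂ ((1 + A) x) x : ℂ)‖ :=
    RCLike.re_le_norm _
  have h3 := hA.2 x
  simp only [NNReal.coe_one, mul_one]
  linarith

open ContinuousLinearMap in
lemma aux_smul_pos {H : Type*} [NormedAddCommGroup H] [InnerProductSpace ℂ H]
    [CompleteSpace H] {A : H →L[ℂ] H} (hA : A.IsPositive) {t : ℝ} (ht : 0 ≤ t) :
    (t • A).IsPositive := by
  refine ⟨?_, fun x => ?_⟩
  · have := hA.isSelfAdjoint
    rw [IsSelfAdjoint] at *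
    rw [← isSelfAdjoint_iff_isSymmetric, IsSelfAdjoint, star_smul, this, star_trivial]
  · have := hA.2 x
    simp only [reApplyInnerSelf, smul_apply] at *
    rw [RCLike.real_smul_eq_coe_smul (K := ℂ), inner_smul_left, RCLike.conj_ofReal,
      RCLike.re_ofReal_mul]
    positivity

/-- For positive operators `P, S` on a complex Hilbert space, `t ≥ 0`, and `R` the
(unique) positive square root of `P` (i.e. `R` positive with `R·R = P`), the operators
`I + tPS` and `I + tRSR` are boundedly invertible, and
`(I + tPS)⁻¹ P = R (I + t R S R)⁻¹ R` in `ℒ(H)`. -/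
theorem stmt_10 {H : Type*} [NormedAddCommGroup H] [InnerProductSpace ℂ H] [CompleteSpace H]
    (P S R : H →L[ℂ] H) (hP : P.IsPositive) (hS : S.IsPositive)
    (hR : R.IsPositive) (hR2 : R * R = P) (t : ℝ) (ht : 0 ≤ t) :
    IsUnit (1 + t • (P * S)) ∧ IsUnit (1 + t • (R * S * R)) ∧
      Ring.inverse (1 + t • (P * S)) * P
        = R * Ring.inverse (1 + t • (R * S * R)) * R := by
  have hRSR : (R * S * R).IsPositive := by
    have := hS.conj_adjoint R
    rwa [hR.isSelfAdjoint.adjoint_eq] at this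
  have hU2 : IsUnit (1 + t • (R * S * R)) := aux_isUnit_one_add_pos (aux_smul_pos hRSR ht)
  have hab : t • (P * S) = R * (t • (R * S)) := by
    rw [← hR2, mul_smul_comm, mul_assoc]
  have hba : (t • (R * S)) * R = t • (R * S * R) := by
    rw [smul_mul_assoc]
  have hU1 : IsUnit (1 + t • (P * S)) := by
    rw [hab]
    exact aux_isUnit_one_add_mul (by rwa [hba])
  refine ⟨hU1, hU2, ?_⟩
  have key : Ring.inverse (1 + R * (t • (R * S))) * R = R * Ring.inverse (1 + (t • (R * S)) * R) :=
    aux_inverse_one_add_mul R (t • (R * S)) (by rwa [← hab]) (by rwa [hba])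
  rw [hab, ← hR2, ← mul_assoc, key, hba]
end

section
/- Let H be a complex Hilbert space, let P, S ∈ Σ⁺(H), and let t ≥ 0. Then the operator (I + tPS)⁻¹P is self-adjoint and positive semi-definite, i.e. (I + tPS)⁻¹P ∈ Σ⁺(H). (Equivalently: the flow of the differential equation Ṗ = −PSP leaves the cone Σ⁺(H) invariant.) -/
lemma aux_swap {M : Type*} [Ring M] {a b : M} (h : IsUnit (1 + b * a)) :
    IsUnit (1 + a * b) ∧ Ring.inverse (1 + a * b) * a = a * Ring.inverse (1 + b * a) := by
  set i := Ring.inverse (1 + b * a) with hi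
  have hi1 : (1 + b * a) * i = 1 := Ring.mul_inverse_cancel _ h
  have hi2 : i * (1 + b * a) = 1 := Ring.inverse_mul_cancel _ h
  have h₁ : (1 + a * b) * (1 - a * i * b) = 1 := by
    have e : (1 + a * b) * (1 - a * i * b) = 1 - a * ((1 + b * a) * i) * b + a * b := by
      noncomm_ring
    rw [e, hi1]; noncomm_ring
  have h₂ : (1 - a * i * b) * (1 + a * b) = 1 := by
    have e : (1 - a * i * b) * (1 + a * b) = 1 - a * (i * (1 + b * a)) * b + a * b := by
      noncomm_ring
    rw [e, hi2]; noncomm_ring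
  refine ⟨⟨⟨_, _, h₁, h₂⟩, rfl⟩, ?_⟩
  have hinv : Ring.inverse (1 + a * b) = 1 - a * i * b := by
    rw [show (1 + a * b) = ((⟨_, _, h₁, h₂⟩ : Mˣ) : M) from rfl, Ring.inverse_unit]; rfl
  have hiba : i * (b * a) = 1 - i := by
    have e : i * (b * a) = i * (1 + b * a) - i := by noncomm_ring
    rw [e, hi2]
  rw [hinv]
  calc (1 - a * i * b) * a = a - a * (i * (b * a)) := by noncomm_ring
    _ = a - a * (1 - i) := by rw [hiba]
    _ = a * i := by noncomm_ring

open scoped InnerProductSpace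
open ContinuousLinearMap RCLike

/-- For positive operators `P, S` on a complex Hilbert space and `t ≥ 0`, the
operator `I + tPS` is boundedly invertible and `(I + tPS)⁻¹P` is self-adjoint and positive
semi-definite, i.e. the flow of `Ṗ = −PSP` leaves the cone of positive operators invariant. -/
theorem stmt_12 {H : Type*} [NormedAddCommGroup H] [InnerProductSpace ℂ H] [CompleteSpace H]
    (P S : H →L[ℂ] H) (hP : P.IsPositive) (hS : S.IsPositive) (t : ℝ) (ht : 0 ≤ t) :
    IsUnit (1 + t • (P * S)) ∧ (Ring.inverse (1 + t • (P * S)) * P).IsPositive := by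
  have hS0 : (0 : H →L[ℂ] H) ≤ S := (nonneg_iff_isPositive S).mpr hS
  obtain ⟨R, hRsa, -, hR2⟩ :=
    CFC.exists_sqrt_of_isSelfAdjoint_of_quasispectrumRestricts hP.isSelfAdjoint hP.spectrumRestricts
  have hRR : R * R = P := hR2
  -- positivity of `t • R S R`
  have hX0 : (0 : H →L[ℂ] H) ≤ t • (R * S * R) := by
    have h := star_left_conjugate_nonneg hS0 (Real.sqrt t • R)
    rwa [star_smul, star_trivial, hRsa.star_eq, smul_mul_assoc, smul_mul_assoc, mul_smul_comm,
      smul_smul, Real.mul_self_sqrt ht] at h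
  set X := t • (R * S * R) with hXdef
  have hXpos : X.IsPositive := (nonneg_iff_isPositive X).mp hX0
  -- `1 + X` is a unit
  have hTunit : IsUnit (1 + X) := by
    refine isUnit_of_forall_le_norm_inner_map _ (c := 1) one_pos fun x => ?_
    have h0 := hXpos.inner_nonneg_left x
    simp only [NNReal.coe_one, mul_one]
    calc ‖x‖ ^ 2 = re ⟪x, x⟫_ℂ := (inner_self_eq_norm_sq (𝕜 := ℂ) x).symm
      _ ≤ re ⟪(1 + X) x, x⟫_ℂ := by
          rw [show (1 + X) x = x + X x from by simp, inner_add_left, map_add]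
          linarith [(RCLike.nonneg_iff.mp h0).1]
      _ ≤ ‖⟪(1 + X) x, x⟫_ℂ‖ := RCLike.re_le_norm _
  -- the inverse of `1 + X` is positive
  have hT0 : (0 : H →L[ℂ] H) ≤ 1 + X := le_add_of_nonneg_right hX0 |>.trans' zero_le_one
  have hTsa : IsSelfAdjoint (1 + X) := ((nonneg_iff_isPositive _).mp hT0).isSelfAdjoint
  set iT := Ring.inverse (1 + X) with hiT
  have hstar : star iT * (1 + X) = 1 := by
    have := congrArg star (Ring.mul_inverse_cancel (1 + X) hTunit)
    rwa [star_mul, hTsa.star_eq, star_one] at this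
  have hiT0 : (0 : H →L[ℂ] H) ≤ iT := by
    have h := star_left_conjugate_nonneg hT0 iT
    rwa [hstar, one_mul] at h
  -- swap identity
  have hab : R * (t • (R * S)) = t • (P * S) := by
    rw [mul_smul_comm, ← mul_assoc, hRR]
  have hba : (t • (R * S)) * R = X := by rw [hXdef, smul_mul_assoc]
  obtain ⟨hu, hform⟩ := aux_swap (a := R) (b := t • (R * S)) (by rw [hba]; exact hTunit)
  rw [← hab]
  refine ⟨hu, ?_⟩
  have key : Ring.inverse (1 + R * (t • (R * S))) * P = R * iT * R := by
    rw [← hRR, ← mul_assoc, hform, hba]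
  rw [key]
  refine (nonneg_iff_isPositive _).mp ?_
  have h := star_left_conjugate_nonneg hiT0 R
  rwa [hRsa.star_eq] at h
end
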